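/- Let H be a complex Hilbert space with orthonormal basis (v_α)_{α ∈ A}, let g : 𝔻 → H be holomorphic with g(0) = 0 and finite Bloch seminorm, and let n, m ∈ ℕ, λ_1,…,λ_n ∈ ℂ, z_1,…,z_n ∈ 𝔻, μ_1,…,μ_m ∈ ℂ, w_1,…,w_m ∈ 𝔻. If for every holomorphic h : 𝔻 → ℂ with h(0) = 0 and finite Bloch seminorm one has ∑_{i=1}^n |λ_i|²|h'(z_i)|² ≤ ∑_{j=1}^m |μ_j|²|h'(w_j)|², then ∑_{i=1}^n |λ_i|²‖g'(z_i)‖² ≤ ∑_{j=1}^m |μ_j|²‖g'(w_j)‖². -/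

import Mathlib

open Complex Metric Set

lemma parseval_hasSum {A H : Type*} [NormedAddCommGroup H] [InnerProductSpace ℂ H]
    [CompleteSpace H] (b : HilbertBasis A ℂ H) (x : H) :
    HasSum (fun α => ‖(inner ℂ (b α) x : ℂ)‖ ^ 2) (‖x‖ ^ 2) := by
  have h := b.hasSum_inner_mul_inner x x
  have h2 := (Complex.reCLM).hasSum h
  simp only [Complex.reCLM_apply] at h2
  convert h2 using 2 with α
  · rw [← inner_conj_symm x (b α), mul_comm, Complex.mul_conj]
    simp [Complex.normSq_eq_norm_sq, ← Complex.ofReal_pow]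
  · exact_mod_cast (inner_self_eq_norm_sq (𝕜 := ℂ) x).symm

theorem stmt3 {A : Type*} {H : Type*} [NormedAddCommGroup H] [InnerProductSpace ℂ H]
    [CompleteSpace H] (b : HilbertBasis A ℂ H)
    (g : ℂ → H) (hg : DifferentiableOn ℂ g (ball (0 : ℂ) 1)) (hg0 : g 0 = 0)
    (hgb : ∃ M, ∀ z ∈ ball (0 : ℂ) 1, (1 - ‖z‖ ^ 2) * ‖deriv g z‖ ≤ M)
    (n m : ℕ) (lam : Fin n → ℂ) (zs : Fin n → ℂ) (hzs : ∀ i, zs i ∈ ball (0 : ℂ) 1)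
    (mu : Fin m → ℂ) (ws : Fin m → ℂ) (hws : ∀ j, ws j ∈ ball (0 : ℂ) 1)
    (hdom : ∀ h : ℂ → ℂ, DifferentiableOn ℂ h (ball (0 : ℂ) 1) → h 0 = 0 →
      (∃ M, ∀ z ∈ ball (0 : ℂ) 1, (1 - ‖z‖ ^ 2) * ‖deriv h z‖ ≤ M) →
      ∑ i, ‖lam i‖ ^ 2 * ‖deriv h (zs i)‖ ^ 2 ≤ ∑ j, ‖mu j‖ ^ 2 * ‖deriv h (ws j)‖ ^ 2) :
    ∑ i, ‖lam i‖ ^ 2 * ‖deriv g (zs i)‖ ^ 2 ≤ ∑ j, ‖mu j‖ ^ 2 * ‖deriv g (ws j)‖ ^ 2 := by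
  obtain ⟨M, hM⟩ := hgb
  have hball : IsOpen (ball (0 : ℂ) 1) := isOpen_ball
  have hgd : ∀ z ∈ ball (0 : ℂ) 1, DifferentiableAt ℂ g z := fun z hz =>
    hg.differentiableAt (hball.mem_nhds hz)
  -- coordinate functions
  set h : A → ℂ → ℂ := fun α z => inner ℂ (b α) (g z) with hh
  have hderiv : ∀ α, ∀ z ∈ ball (0 : ℂ) 1,
      deriv (h α) z = inner ℂ (b α) (deriv g z) := by
    intro α z hz
    have hd := (hgd z hz).hasDerivAt
    have : HasDerivAt (h α) (inner ℂ (b α) (deriv g z)) z := by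
      exact (innerSL ℂ (b α)).hasFDerivAt.comp_hasDerivAt z hd
    exact this.deriv
  have hnorm1 : ∀ α : A, ‖b α‖ = 1 := fun α => b.orthonormal.1 α
  have hbound : ∀ α, ∀ z ∈ ball (0 : ℂ) 1, ‖deriv (h α) z‖ ≤ ‖deriv g z‖ := by
    intro α z hz
    rw [hderiv α z hz]
    calc ‖(inner ℂ (b α) (deriv g z) : ℂ)‖ ≤ ‖b α‖ * ‖deriv g z‖ := norm_inner_le_norm _ _
      _ = ‖deriv g z‖ := by rw [hnorm1]; ring
  have hkey : ∀ α, ∑ i, ‖lam i‖ ^ 2 * ‖(inner ℂ (b α) (deriv g (zs i)) : ℂ)‖ ^ 2 ≤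
      ∑ j, ‖mu j‖ ^ 2 * ‖(inner ℂ (b α) (deriv g (ws j)) : ℂ)‖ ^ 2 := by
    intro α
    have hα := hdom (h α)
      (fun z hz => ((innerSL ℂ (b α)).differentiableAt.comp_differentiableWithinAt z
        (hg z hz)))
      (by simp [hh, hg0])
      (⟨M, fun z hz => le_trans (by
          have h1 : (0:ℝ) ≤ 1 - ‖z‖ ^ 2 := by
            have := mem_ball_zero_iff.mp hz
            nlinarith [norm_nonneg z]
          exact mul_le_mul_of_nonneg_left (hbound α z hz) h1) (hM z hz)⟩)
    calc ∑ i, ‖lam i‖ ^ 2 * ‖(inner ℂ (b α) (deriv g (zs i)) : ℂ)‖ ^ 2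
        = ∑ i, ‖lam i‖ ^ 2 * ‖deriv (h α) (zs i)‖ ^ 2 := by
          refine Finset.sum_congr rfl fun i _ => ?_
          rw [hderiv α (zs i) (hzs i)]
      _ ≤ ∑ j, ‖mu j‖ ^ 2 * ‖deriv (h α) (ws j)‖ ^ 2 := hα
      _ = ∑ j, ‖mu j‖ ^ 2 * ‖(inner ℂ (b α) (deriv g (ws j)) : ℂ)‖ ^ 2 := by
          refine Finset.sum_congr rfl fun j _ => ?_
          rw [hderiv α (ws j) (hws j)]
  have hF : HasSum (fun α => ∑ i, ‖lam i‖ ^ 2 * ‖(inner ℂ (b α) (deriv g (zs i)) : ℂ)‖ ^ 2)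
      (∑ i, ‖lam i‖ ^ 2 * ‖deriv g (zs i)‖ ^ 2) :=
    hasSum_sum fun i _ => (parseval_hasSum b (deriv g (zs i))).mul_left _
  have hG : HasSum (fun α => ∑ j, ‖mu j‖ ^ 2 * ‖(inner ℂ (b α) (deriv g (ws j)) : ℂ)‖ ^ 2)
      (∑ j, ‖mu j‖ ^ 2 * ‖deriv g (ws j)‖ ^ 2) :=
    hasSum_sum fun j _ => (parseval_hasSum b (deriv g (ws j))).mul_left _
  calc ∑ i, ‖lam i‖ ^ 2 * ‖deriv g (zs i)‖ ^ 2 = _ := hF.tsum_eq.symm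
    _ ≤ _ := Summable.tsum_le_tsum hkey hF.summable hG.summable
    _ = ∑ j, ‖mu j‖ ^ 2 * ‖deriv g (ws j)‖ ^ 2 := hG.tsum_eq
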